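/- For all real numbers θ, γ with |θ| < π and |γ| < π and |tan(γ/2)| ≤ 1, and every real number r, the following inequality holds: |1 − cos θ − r(1 − cos γ)| + |sin θ − r sin γ| ≥ |sin θ| · |tan(θ/2) − tan(γ/2)|. -/

import Mathlib

open Real

lemma half_id (θ : ℝ) (h : |θ| < π) : 1 - cos θ = sin θ * tan (θ / 2) := by
  have hc : cos (θ / 2) ≠ 0 := by
    have : 0 < cos (θ / 2) := by
      apply Real.cos_pos_of_mem_Ioo
      rcases abs_lt.1 h with ⟨h1, h2⟩
      constructor <;> [linarith; linarith]
    linarith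
  have hs : sin θ = 2 * sin (θ / 2) * cos (θ / 2) := by
    rw [← Real.sin_two_mul]; ring_nf
  have hcθ : cos θ = 2 * cos (θ / 2) ^ 2 - 1 := by
    rw [← Real.cos_two_mul]; ring_nf
  rw [hs, Real.tan_eq_sin_div_cos]
  field_simp
  linear_combination (-2) * Real.sin_sq_add_cos_sq (θ/2) - hcθ

/-- The elementary trigonometric inequality from the proof of Lemma 3.4 of Smith–Sogge,
"Null form estimates for (1/2,1/2) symbols and local existence for a quasilinear
Dirichlet-wave equation": for `|θ| < π`, `|γ| < π` with `|tan(γ/2)| ≤ 1`, and any `r ∈ ℝ`,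
`|1 - cos θ - r(1 - cos γ)| + |sin θ - r sin γ| ≥ |sin θ| ⬝ |tan(θ/2) - tan(γ/2)|`. -/
theorem stmt_16 (θ γ r : ℝ) (hθ : |θ| < π) (hγ : |γ| < π) (hγ2 : |tan (γ / 2)| ≤ 1) :
    |sin θ| * |tan (θ / 2) - tan (γ / 2)| ≤
      |1 - cos θ - r * (1 - cos γ)| + |sin θ - r * sin γ| := by
  have h1 := half_id θ hθ
  have h2 := half_id γ hγ
  have key : sin θ * (tan (θ / 2) - tan (γ / 2)) =
      (1 - cos θ - r * (1 - cos γ)) - tan (γ / 2) * (sin θ - r * sin γ) := by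
    rw [h1, h2]; ring
  calc |sin θ| * |tan (θ / 2) - tan (γ / 2)|
      = |(1 - cos θ - r * (1 - cos γ)) - tan (γ / 2) * (sin θ - r * sin γ)| := by
        rw [← abs_mul, key]
    _ ≤ |1 - cos θ - r * (1 - cos γ)| + |tan (γ / 2) * (sin θ - r * sin γ)| :=
        abs_sub _ _
    _ ≤ |1 - cos θ - r * (1 - cos γ)| + |sin θ - r * sin γ| := by
        rw [abs_mul]
        have := abs_nonneg (sin θ - r * sin γ)
        nlinarith
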